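/- Let n ≥ 3 and let Σ = {±e_k ± e_l : 1 ≤ k < l ≤ n} ∪ {±e_k : 1 ≤ k ≤ n} ⊂ ℝ^n be the root system of type B_n with simple roots α_k = e_k − e_{k+1} (1 ≤ k ≤ n−1) and α_n = e_n. Let 1 ≤ i < j ≤ n−1, let S = {α_k : 1 ≤ k ≤ n, k ≠ i, k ≠ j}, and let p be the orthogonal projection of ℝ^n onto the orthogonal complement of the span of S. Write ᾱ_i = p(α_i) and ᾱ_j = p(α_j). Then ᾱ_i and ᾱ_j are linearly independent and the set of reduced restricted roots Σ_red(S) equals {±ᾱ_i, ±ᾱ_j, ±(ᾱ_i + ᾱ_j), ±(ᾱ_i + 2ᾱ_j)}. -/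

import Mathlib

noncomputable section

/-- The `k`-th standard basis vector of `ℝ^N`. -/
def e {N : ℕ} (k : Fin N) : EuclideanSpace ℝ (Fin N) := EuclideanSpace.single k 1

/-- Orthogonal projection of `ℝ^N` onto the orthogonal complement of the span of `S`. -/
def projC {N : ℕ} (S : Set (EuclideanSpace ℝ (Fin N))) (v : EuclideanSpace ℝ (Fin N)) :
    EuclideanSpace ℝ (Fin N) :=
  (Submodule.orthogonalProjectionOnto ((Submodule.span ℝ S)ᗮ) v : EuclideanSpace ℝ (Fin N))

/-- The set of restricted roots `Σ(S) = p(Σ) \ {0}`. -/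
def restrictedRoots {N : ℕ} (Rts S : Set (EuclideanSpace ℝ (Fin N))) :
    Set (EuclideanSpace ℝ (Fin N)) :=
  (projC S '' Rts) \ {0}

/-- The set of reduced restricted roots: those `x ∈ Σ(S)` with `x/2 ∉ Σ(S)`. -/
def reducedRestrictedRoots {N : ℕ} (Rts S : Set (EuclideanSpace ℝ (Fin N))) :
    Set (EuclideanSpace ℝ (Fin N)) :=
  {x ∈ restrictedRoots Rts S | ¬ (1 / 2 : ℝ) • x ∈ restrictedRoots Rts S}

/-- The root system of type `B_n` in `ℝ^n`: `±e_k ± e_l` (`k < l`) and `±e_k`. -/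
def Broots (n : ℕ) : Set (EuclideanSpace ℝ (Fin n)) :=
  {v | ∃ k l : Fin n, k < l ∧
    (v = e k - e l ∨ v = e k + e l ∨ v = -e k + e l ∨ v = -e k - e l)} ∪
  {v | ∃ k : Fin n, v = e k ∨ v = -e k}

/-- The simple roots of `B_n`: `α_k = e_k − e_{k+1}` (`1 ≤ k ≤ n−1`) and `α_n = e_n`
(indexed here by `Fin n`). -/
def Bsimple (n : ℕ) (k : Fin n) : EuclideanSpace ℝ (Fin n) :=
  if h : (k : ℕ) + 1 < n then e k - e ⟨(k : ℕ) + 1, h⟩ else e k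

-- auxiliary lemmas
def Sset (n : ℕ) (i j : Fin n) : Set (EuclideanSpace ℝ (Fin n)) :=
  {v | ∃ k : Fin n, k ≠ i ∧ k ≠ j ∧ v = Bsimple n k}

def uu (n : ℕ) (i : Fin n) : EuclideanSpace ℝ (Fin n) :=
  WithLp.toLp 2 (fun k : Fin n => if (k:ℕ) ≤ (i:ℕ) then (((i:ℕ):ℝ)+1)⁻¹ else 0)

def ww (n : ℕ) (i j : Fin n) : EuclideanSpace ℝ (Fin n) :=
  WithLp.toLp 2 (fun k : Fin n => if (i:ℕ) < (k:ℕ) ∧ (k:ℕ) ≤ (j:ℕ) then (((j:ℕ):ℝ) - ((i:ℕ):ℝ))⁻¹ else 0)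

lemma inner_e {N : ℕ} (k : Fin N) (v : EuclideanSpace ℝ (Fin N)) :
    inner ℝ (e k) v = v k := by
  simp [e, EuclideanSpace.inner_single_left]

lemma mem_orthogonal_span {N : ℕ} {S : Set (EuclideanSpace ℝ (Fin N))}
    {v : EuclideanSpace ℝ (Fin N)} (h : ∀ u ∈ S, inner ℝ u v = (0:ℝ)) :
    v ∈ (Submodule.span ℝ S)ᗮ := by
  rw [Submodule.mem_orthogonal]
  intro u hu
  induction hu using Submodule.span_induction with
  | mem x hx => exact h x hx
  | zero => simp
  | add x y _ _ hx hy => rw [inner_add_left, hx, hy, add_zero]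
  | smul c x _ hx => rw [real_inner_smul_left, hx, mul_zero]

lemma projC_eq {N : ℕ} {S : Set (EuclideanSpace ℝ (Fin N))}
    {v q : EuclideanSpace ℝ (Fin N)}
    (h1 : q ∈ (Submodule.span ℝ S)ᗮ) (h2 : v - q ∈ Submodule.span ℝ S) :
    projC S v = q := by
  unfold projC
  exact (Submodule.coe_orthogonalProjectionOnto_apply _ _).trans (Submodule.eq_starProjection_of_mem_orthogonal h1
    (by rwa [Submodule.orthogonal_orthogonal]))

lemma projC_add {N : ℕ} (S : Set (EuclideanSpace ℝ (Fin N))) (x y : EuclideanSpace ℝ (Fin N)) :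
    projC S (x + y) = projC S x + projC S y := by simp [projC]

lemma projC_neg {N : ℕ} (S : Set (EuclideanSpace ℝ (Fin N))) (x : EuclideanSpace ℝ (Fin N)) :
    projC S (-x) = - projC S x := by simp [projC]

lemma projC_sub {N : ℕ} (S : Set (EuclideanSpace ℝ (Fin N))) (x y : EuclideanSpace ℝ (Fin N)) :
    projC S (x - y) = projC S x - projC S y := by simp [projC]

section Main
variable {n : ℕ} {i j : Fin n}

lemma uu_mem (hij : i < j) (hj : (j:ℕ)+1 < n) :
    uu n i ∈ (Submodule.span ℝ (Sset n i j))ᗮ := by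
  apply mem_orthogonal_span
  rintro u ⟨k, hki, hkj, rfl⟩
  have hIJ : (i:ℕ) < (j:ℕ) := hij
  unfold Bsimple
  split_ifs with h
  · rw [inner_sub_left, inner_e, inner_e]
    show (if (k:ℕ) ≤ (i:ℕ) then (((i:ℕ):ℝ)+1)⁻¹ else 0)
        - (if ((⟨(k:ℕ)+1, h⟩ : Fin n) :ℕ) ≤ (i:ℕ) then (((i:ℕ):ℝ)+1)⁻¹ else 0) = 0
    simp only [Fin.val_mk]
    rcases le_or_gt (k:ℕ) (i:ℕ) with hk | hk
    · have : (k:ℕ) < (i:ℕ) := lt_of_le_of_ne hk (by simpa [Fin.val_eq_val] using hki)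
      rw [if_pos hk, if_pos (by omega : (k:ℕ)+1 ≤ (i:ℕ)), sub_self]
    · rw [if_neg (by omega), if_neg (by omega), sub_self]
  · rw [inner_e]
    show (if (k:ℕ) ≤ (i:ℕ) then (((i:ℕ):ℝ)+1)⁻¹ else 0) = 0
    rw [if_neg (by omega)]

lemma ww_mem (hij : i < j) (hj : (j:ℕ)+1 < n) :
    ww n i j ∈ (Submodule.span ℝ (Sset n i j))ᗮ := by
  apply mem_orthogonal_span
  rintro u ⟨k, hki, hkj, rfl⟩
  have hIJ : (i:ℕ) < (j:ℕ) := hij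
  have hki' : (k:ℕ) ≠ (i:ℕ) := by simpa [Fin.val_eq_val] using hki
  have hkj' : (k:ℕ) ≠ (j:ℕ) := by simpa [Fin.val_eq_val] using hkj
  unfold Bsimple
  split_ifs with h
  · rw [inner_sub_left, inner_e, inner_e]
    show (if (i:ℕ) < (k:ℕ) ∧ (k:ℕ) ≤ (j:ℕ) then (((j:ℕ):ℝ) - ((i:ℕ):ℝ))⁻¹ else 0)
        - (if (i:ℕ) < ((⟨(k:ℕ)+1, h⟩ : Fin n):ℕ) ∧ ((⟨(k:ℕ)+1, h⟩ : Fin n):ℕ) ≤ (j:ℕ)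
            then (((j:ℕ):ℝ) - ((i:ℕ):ℝ))⁻¹ else 0) = 0
    simp only [Fin.val_mk]
    by_cases hk : (i:ℕ) < (k:ℕ) ∧ (k:ℕ) ≤ (j:ℕ)
    · rw [if_pos hk, if_pos (by omega), sub_self]
    · rw [if_neg hk, if_neg (by omega), sub_self]
  · rw [inner_e]
    show (if (i:ℕ) < (k:ℕ) ∧ (k:ℕ) ≤ (j:ℕ) then (((j:ℕ):ℝ) - ((i:ℕ):ℝ))⁻¹ else 0) = 0
    rw [if_neg (by omega)]

lemma step_mem (k : Fin n) (h : (k:ℕ)+1 < n)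
    (hki : (k:ℕ) ≠ (i:ℕ)) (hkj : (k:ℕ) ≠ (j:ℕ)) :
    e k - e ⟨(k:ℕ)+1, h⟩ ∈ Submodule.span ℝ (Sset n i j) := by
  have : Bsimple n k ∈ Submodule.span ℝ (Sset n i j) :=
    Submodule.subset_span ⟨k, by simpa [← Fin.val_eq_val] using hki,
      by simpa [← Fin.val_eq_val] using hkj, rfl⟩
  rwa [Bsimple, dif_pos h] at this

lemma diffA (hij : i < j) (hj : (j:ℕ)+1 < n) (k l : Fin n)
    (hk : (k:ℕ) ≤ (i:ℕ)) (hl : (l:ℕ) ≤ (i:ℕ)) :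
    e k - e l ∈ Submodule.span ℝ (Sset n i j) := by
  have hIJ : (i:ℕ) < (j:ℕ) := hij
  have hn0 : 0 < n := by omega
  have aux : ∀ m : ℕ, ∀ hm : m ≤ (i:ℕ),
      e (⟨0, hn0⟩ : Fin n) - e ⟨m, by omega⟩ ∈ Submodule.span ℝ (Sset n i j) := by
    intro m
    induction m with
    | zero => intro _; simpa using (Submodule.span ℝ (Sset n i j)).zero_mem
    | succ m ih =>
      intro hm
      have h1 : e (⟨0, hn0⟩ : Fin n) - e ⟨m+1, by omega⟩ =
          (e (⟨0, hn0⟩ : Fin n) - e ⟨m, by omega⟩) +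
          (e (⟨m, by omega⟩ : Fin n) - e ⟨m+1, by omega⟩) := by abel
      rw [h1]
      exact Submodule.add_mem _ (ih (by omega))
        (step_mem ⟨m, by omega⟩ (by simp; omega) (by simp; omega) (by simp; omega))
  have hk' : e (⟨0, hn0⟩ : Fin n) - e k ∈ Submodule.span ℝ (Sset n i j) := by
    have := aux (k:ℕ) hk
    simpa using this
  have hl' : e (⟨0, hn0⟩ : Fin n) - e l ∈ Submodule.span ℝ (Sset n i j) := by
    have := aux (l:ℕ) hl
    simpa using this
  have : e k - e l = (e (⟨0, hn0⟩ : Fin n) - e l) - (e (⟨0, hn0⟩ : Fin n) - e k) := by abel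
  rw [this]
  exact Submodule.sub_mem _ hl' hk'

lemma diffB (hij : i < j) (hj : (j:ℕ)+1 < n) (k l : Fin n)
    (hk1 : (i:ℕ) < (k:ℕ)) (hk2 : (k:ℕ) ≤ (j:ℕ))
    (hl1 : (i:ℕ) < (l:ℕ)) (hl2 : (l:ℕ) ≤ (j:ℕ)) :
    e k - e l ∈ Submodule.span ℝ (Sset n i j) := by
  have hIJ : (i:ℕ) < (j:ℕ) := hij
  have aux : ∀ d : ℕ, ∀ hd : (i:ℕ)+1+d ≤ (j:ℕ),
      e (⟨(i:ℕ)+1, by omega⟩ : Fin n) - e ⟨(i:ℕ)+1+d, by omega⟩ ∈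
        Submodule.span ℝ (Sset n i j) := by
    intro d
    induction d with
    | zero => intro _; simpa using (Submodule.span ℝ (Sset n i j)).zero_mem
    | succ d ih =>
      intro hd
      have h1 : e (⟨(i:ℕ)+1, by omega⟩ : Fin n) - e ⟨(i:ℕ)+1+(d+1), by omega⟩ =
          (e (⟨(i:ℕ)+1, by omega⟩ : Fin n) - e ⟨(i:ℕ)+1+d, by omega⟩) +
          (e (⟨(i:ℕ)+1+d, by omega⟩ : Fin n) - e ⟨(i:ℕ)+1+d+1, by omega⟩) := by
        have : (⟨(i:ℕ)+1+(d+1), by omega⟩ : Fin n) = ⟨(i:ℕ)+1+d+1, by omega⟩ := by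
          apply Fin.ext; simp; omega
        rw [this]; abel
      rw [h1]
      exact Submodule.add_mem _ (ih (by omega))
        (step_mem ⟨(i:ℕ)+1+d, by omega⟩ (by simp; omega) (by simp; omega) (by simp; omega))
  have conv : ∀ m : Fin n, (i:ℕ) < (m:ℕ) → (m:ℕ) ≤ (j:ℕ) →
      e (⟨(i:ℕ)+1, by omega⟩ : Fin n) - e m ∈ Submodule.span ℝ (Sset n i j) := by
    intro m hm1 hm2
    have hd : (i:ℕ)+1+((m:ℕ)-(i:ℕ)-1) ≤ (j:ℕ) := by omega
    have := aux ((m:ℕ)-(i:ℕ)-1) hd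
    have hm : (⟨(i:ℕ)+1+((m:ℕ)-(i:ℕ)-1), by omega⟩ : Fin n) = m := by
      apply Fin.ext; simp; omega
    rwa [hm] at this
  have : e k - e l = (e (⟨(i:ℕ)+1, by omega⟩ : Fin n) - e l)
      - (e (⟨(i:ℕ)+1, by omega⟩ : Fin n) - e k) := by abel
  rw [this]
  exact Submodule.sub_mem _ (conv l hl1 hl2) (conv k hk1 hk2)

lemma memC (hij : i < j) (hj : (j:ℕ)+1 < n) (k : Fin n) (hk : (j:ℕ) < (k:ℕ)) :
    e k ∈ Submodule.span ℝ (Sset n i j) := by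
  have hIJ : (i:ℕ) < (j:ℕ) := hij
  have aux : ∀ d : ℕ, ∀ k : Fin n, (k:ℕ) + d + 1 = n → (j:ℕ) < (k:ℕ) →
      e k ∈ Submodule.span ℝ (Sset n i j) := by
    intro d
    induction d with
    | zero =>
      intro k hkn hjk
      apply Submodule.subset_span
      refine ⟨k, fun h => by subst h; omega, fun h => by subst h; omega, ?_⟩
      rw [Bsimple, dif_neg (by omega)]
    | succ d ih =>
      intro k hkn hjk
      have h1 : (k:ℕ)+1 < n := by omega
      have h2 : e k = (e k - e ⟨(k:ℕ)+1, h1⟩) + e ⟨(k:ℕ)+1, h1⟩ := by abel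
      rw [h2]
      exact Submodule.add_mem _ (step_mem k h1 (by omega) (by omega))
        (ih ⟨(k:ℕ)+1, h1⟩ (by simp; omega) (by simp; omega))
  exact aux (n - (k:ℕ) - 1) k (by omega) hk

lemma ek_sub_uu (k : Fin n) (hk : (k:ℕ) ≤ (i:ℕ)) :
    e k - uu n i = (((i:ℕ):ℝ)+1)⁻¹ • ∑ m ∈ Finset.Iic i, (e k - e m) := by
  ext x
  have ha : (((i:ℕ):ℝ)+1) ≠ 0 := by positivity
  show e k x - uu n i x = (((i:ℕ):ℝ)+1)⁻¹ * (∑ m ∈ Finset.Iic i, (e k - e m)) x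
  rw [WithLp.ofLp_sum, Finset.sum_apply]
  simp only [PiLp.sub_apply, Finset.sum_sub_distrib, Finset.sum_const, Fin.card_Iic, e,
    EuclideanSpace.single_apply, Finset.sum_ite_eq, Finset.mem_Iic, nsmul_eq_mul]
  show (if x = k then (1:ℝ) else 0) - uu n i x = _
  rw [show uu n i x = (if (x:ℕ) ≤ (i:ℕ) then (((i:ℕ):ℝ)+1)⁻¹ else 0) from rfl]
  simp only [Fin.le_def]
  by_cases hx : x = k
  · subst hx
    rw [if_pos rfl, if_pos hk, if_pos hk]
    push_cast
    field_simp
  · rw [if_neg hx]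
    by_cases hxi : (x:ℕ) ≤ (i:ℕ)
    · rw [if_pos hxi, if_pos hxi]; push_cast; field_simp
    · rw [if_neg hxi, if_neg hxi]; simp

lemma ek_sub_ww (hij : i < j) (k : Fin n) (hk1 : (i:ℕ) < (k:ℕ)) (hk2 : (k:ℕ) ≤ (j:ℕ)) :
    e k - ww n i j = (((j:ℕ):ℝ) - ((i:ℕ):ℝ))⁻¹ • ∑ m ∈ Finset.Ioc i j, (e k - e m) := by
  have hIJ : (i:ℕ) < (j:ℕ) := hij
  have hb : (((j:ℕ):ℝ) - ((i:ℕ):ℝ)) ≠ 0 := by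
    have : ((i:ℕ):ℝ) < ((j:ℕ):ℝ) := by exact_mod_cast hIJ
    linarith
  ext x
  show e k x - ww n i j x = (((j:ℕ):ℝ) - ((i:ℕ):ℝ))⁻¹ * (∑ m ∈ Finset.Ioc i j, (e k - e m)) x
  rw [WithLp.ofLp_sum, Finset.sum_apply]
  simp only [PiLp.sub_apply, Finset.sum_sub_distrib, Finset.sum_const, Fin.card_Ioc, e,
    EuclideanSpace.single_apply, Finset.sum_ite_eq, Finset.mem_Ioc, nsmul_eq_mul]
  rw [show ww n i j x = (if (i:ℕ) < (x:ℕ) ∧ (x:ℕ) ≤ (j:ℕ)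
      then (((j:ℕ):ℝ) - ((i:ℕ):ℝ))⁻¹ else 0) from rfl]
  simp only [Fin.lt_def, Fin.le_def]
  have hcast : (((j:ℕ) - (i:ℕ) : ℕ) : ℝ) = ((j:ℕ):ℝ) - ((i:ℕ):ℝ) := by
    rw [Nat.cast_sub (le_of_lt hIJ)]
  rw [hcast]
  by_cases hx : x = k
  · subst hx
    rw [if_pos rfl, if_pos ⟨hk1, hk2⟩, if_pos ⟨hk1, hk2⟩]
    field_simp
  · rw [if_neg hx]
    by_cases hxi : (i:ℕ) < (x:ℕ) ∧ (x:ℕ) ≤ (j:ℕ)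
    · rw [if_pos hxi, if_pos hxi]; field_simp
    · rw [if_neg hxi, if_neg hxi]; simp

lemma projC_e_A (hij : i < j) (hj : (j:ℕ)+1 < n) (k : Fin n) (hk : (k:ℕ) ≤ (i:ℕ)) :
    projC (Sset n i j) (e k) = uu n i := by
  apply projC_eq (uu_mem hij hj)
  rw [ek_sub_uu k hk]
  exact Submodule.smul_mem _ _ (Submodule.sum_mem _ fun m hm =>
    diffA hij hj k m hk (Fin.le_def.mp (Finset.mem_Iic.mp hm)))

lemma projC_e_B (hij : i < j) (hj : (j:ℕ)+1 < n) (k : Fin n)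
    (hk1 : (i:ℕ) < (k:ℕ)) (hk2 : (k:ℕ) ≤ (j:ℕ)) :
    projC (Sset n i j) (e k) = ww n i j := by
  apply projC_eq (ww_mem hij hj)
  rw [ek_sub_ww hij k hk1 hk2]
  refine Submodule.smul_mem _ _ (Submodule.sum_mem _ fun m hm => ?_)
  obtain ⟨hm1, hm2⟩ := Finset.mem_Ioc.mp hm
  exact diffB hij hj k m hk1 hk2 (Fin.lt_def.mp hm1) (Fin.le_def.mp hm2)

lemma projC_e_C (hij : i < j) (hj : (j:ℕ)+1 < n) (k : Fin n) (hk : (j:ℕ) < (k:ℕ)) :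
    projC (Sset n i j) (e k) = 0 := by
  apply projC_eq (Submodule.zero_mem _)
  rw [sub_zero]
  exact memC hij hj k hk

lemma indep (hij : i < j) (c d : ℝ) (h : c • uu n i + d • ww n i j = 0) :
    c = 0 ∧ d = 0 := by
  have hIJ : (i:ℕ) < (j:ℕ) := hij
  have ha : (((i:ℕ):ℝ)+1) ≠ 0 := by positivity
  have hb : (((j:ℕ):ℝ) - ((i:ℕ):ℝ)) ≠ 0 := by
    have : ((i:ℕ):ℝ) < ((j:ℕ):ℝ) := by exact_mod_cast hIJ
    linarith
  have hi := congrArg (fun v : EuclideanSpace ℝ (Fin n) => v i) h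
  have hj' := congrArg (fun v : EuclideanSpace ℝ (Fin n) => v j) h
  have e1 : c * (((i:ℕ):ℝ)+1)⁻¹ + d * 0 = 0 := by
    have : (c • uu n i + d • ww n i j) i = c * uu n i i + d * ww n i j i := rfl
    rw [this] at hi
    rw [show uu n i i = (((i:ℕ):ℝ)+1)⁻¹ from if_pos le_rfl,
        show ww n i j i = 0 from if_neg (by omega)] at hi
    exact hi
  have e2 : c * 0 + d * (((j:ℕ):ℝ) - ((i:ℕ):ℝ))⁻¹ = 0 := by
    have : (c • uu n i + d • ww n i j) j = c * uu n i j + d * ww n i j j := rfl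
    rw [this] at hj'
    rw [show uu n i j = 0 from if_neg (by omega),
        show ww n i j j = (((j:ℕ):ℝ) - ((i:ℕ):ℝ))⁻¹ from if_pos (by omega)] at hj'
    exact hj'
  constructor
  · field_simp at e1; simpa using e1
  · field_simp at e2; simpa using e2

lemma coeff_inj (hij : i < j) {c d c' d' : ℝ}
    (h : c • uu n i + d • ww n i j = c' • uu n i + d' • ww n i j) :
    c = c' ∧ d = d' := by
  have h0 : (c - c') • uu n i + (d - d') • ww n i j = 0 := by
    rw [sub_smul, sub_smul]
    rw [show c • uu n i - c' • uu n i + (d • ww n i j - d' • ww n i j)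
      = (c • uu n i + d • ww n i j) - (c' • uu n i + d' • ww n i j) by abel, h, sub_self]
  obtain ⟨h1, h2⟩ := indep hij _ _ h0
  constructor <;> linarith

end Main

section Main2
variable {n : ℕ} {i j : Fin n}

def inF (c d : ℝ) : Prop :=
  (c=0∧d=0) ∨ (c=1∧d=0) ∨ (c=-1∧d=0) ∨ (c=0∧d=1) ∨ (c=0∧d=-1) ∨
  (c=1∧d=1) ∨ (c=-1∧d=-1) ∨ (c=1∧d=-1) ∨ (c=-1∧d=1) ∨
  (c=2∧d=0) ∨ (c=-2∧d=0) ∨ (c=0∧d=2) ∨ (c=0∧d=-2)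

lemma proj_basis (hij : i < j) (hj : (j:ℕ)+1 < n) (k : Fin n) :
    ∃ c d : ℝ, ((c=1∧d=0) ∨ (c=0∧d=1) ∨ (c=0∧d=0)) ∧
      projC (Sset n i j) (e k) = c • uu n i + d • ww n i j := by
  rcases le_or_gt (k:ℕ) (i:ℕ) with h | h
  · exact ⟨1, 0, Or.inl ⟨rfl, rfl⟩, by rw [projC_e_A hij hj k h]; module⟩
  · rcases le_or_gt (k:ℕ) (j:ℕ) with h2 | h2
    · exact ⟨0, 1, Or.inr (Or.inl ⟨rfl, rfl⟩), by rw [projC_e_B hij hj k h h2]; module⟩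
    · exact ⟨0, 0, Or.inr (Or.inr ⟨rfl, rfl⟩), by rw [projC_e_C hij hj k h2]; module⟩

lemma proj_root (hij : i < j) (hj : (j:ℕ)+1 < n) {β : EuclideanSpace ℝ (Fin n)}
    (hβ : β ∈ Broots n) :
    ∃ c d : ℝ, inF c d ∧ projC (Sset n i j) β = c • uu n i + d • ww n i j := by
  rcases hβ with ⟨k, l, hkl, hcase⟩ | ⟨k, hcase⟩
  · obtain ⟨ck, dk, hkF, hk⟩ := proj_basis hij hj k
    obtain ⟨cl, dl, hlF, hl⟩ := proj_basis hij hj l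
    rcases hcase with rfl | rfl | rfl | rfl
    · refine ⟨ck - cl, dk - dl, ?_, by rw [projC_sub, hk, hl]; module⟩
      rcases hkF with ⟨rfl,rfl⟩|⟨rfl,rfl⟩|⟨rfl,rfl⟩ <;>
        rcases hlF with ⟨rfl,rfl⟩|⟨rfl,rfl⟩|⟨rfl,rfl⟩ <;> norm_num [inF]
    · refine ⟨ck + cl, dk + dl, ?_, by rw [projC_add, hk, hl]; module⟩
      rcases hkF with ⟨rfl,rfl⟩|⟨rfl,rfl⟩|⟨rfl,rfl⟩ <;>
        rcases hlF with ⟨rfl,rfl⟩|⟨rfl,rfl⟩|⟨rfl,rfl⟩ <;> norm_num [inF]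
    · refine ⟨-ck + cl, -dk + dl, ?_, by rw [projC_add, projC_neg, hk, hl]; module⟩
      rcases hkF with ⟨rfl,rfl⟩|⟨rfl,rfl⟩|⟨rfl,rfl⟩ <;>
        rcases hlF with ⟨rfl,rfl⟩|⟨rfl,rfl⟩|⟨rfl,rfl⟩ <;> norm_num [inF]
    · refine ⟨-ck - cl, -dk - dl, ?_, by rw [projC_sub, projC_neg, hk, hl]; module⟩
      rcases hkF with ⟨rfl,rfl⟩|⟨rfl,rfl⟩|⟨rfl,rfl⟩ <;>
        rcases hlF with ⟨rfl,rfl⟩|⟨rfl,rfl⟩|⟨rfl,rfl⟩ <;> norm_num [inF]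
  · obtain ⟨ck, dk, hkF, hk⟩ := proj_basis hij hj k
    rcases hcase with rfl | rfl
    · refine ⟨ck, dk, ?_, hk⟩
      rcases hkF with ⟨rfl,rfl⟩|⟨rfl,rfl⟩|⟨rfl,rfl⟩ <;> norm_num [inF]
    · refine ⟨-ck, -dk, ?_, by rw [projC_neg, hk]; module⟩
      rcases hkF with ⟨rfl,rfl⟩|⟨rfl,rfl⟩|⟨rfl,rfl⟩ <;> norm_num [inF]

lemma uu_ne (hij : i < j) : uu n i ≠ 0 := by
  intro h
  have := (indep hij 1 0 (by rw [one_smul, zero_smul, add_zero, h])).1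
  norm_num at this

lemma ww_ne (hij : i < j) : ww n i j ≠ 0 := by
  intro h
  have := (indep hij 0 1 (by rw [one_smul, zero_smul, zero_add, h])).2
  norm_num at this

lemma coeff_ne_zero (hij : i < j) {c d : ℝ} (h : ¬(c = 0 ∧ d = 0)) :
    c • uu n i + d • ww n i j ≠ 0 :=
  fun h0 => h (indep hij c d h0)

end Main2


/-- In type `B_n` (`n ≥ 3`), removing the simple roots `α_i, α_j`
(`1 ≤ i < j ≤ n−1`), the projections `ᾱ_i, ᾱ_j` onto the orthogonal complement of the
span of the remaining simple roots are linearly independent, and the set of reduced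
restricted roots is `{±ᾱ_i, ±ᾱ_j, ±(ᾱ_i + ᾱ_j), ±(ᾱ_i + 2ᾱ_j)}` (type `B_2`). -/
theorem statement6 (n : ℕ) (hn : 3 ≤ n) (i j : Fin n) (hij : i < j)
    (hj : (j : ℕ) + 1 < n)
    (S : Set (EuclideanSpace ℝ (Fin n)))
    (hS : S = {v | ∃ k : Fin n, k ≠ i ∧ k ≠ j ∧ v = Bsimple n k}) :
    LinearIndependent ℝ ![projC S (Bsimple n i), projC S (Bsimple n j)] ∧
    reducedRestrictedRoots (Broots n) S =
      {projC S (Bsimple n i), -projC S (Bsimple n i),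
       projC S (Bsimple n j), -projC S (Bsimple n j),
       projC S (Bsimple n i) + projC S (Bsimple n j),
       -(projC S (Bsimple n i) + projC S (Bsimple n j)),
       projC S (Bsimple n i) + (2 : ℝ) • projC S (Bsimple n j),
       -(projC S (Bsimple n i) + (2 : ℝ) • projC S (Bsimple n j))} := by
  have hS' : S = Sset n i j := hS
  subst hS'
  have hIJ : (i:ℕ) < (j:ℕ) := hij
  have hi1 : (i:ℕ)+1 < n := by omega
  have hA : projC (Sset n i j) (Bsimple n i) = uu n i - ww n i j := by
    rw [Bsimple, dif_pos hi1, projC_sub, projC_e_A hij hj i le_rfl,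
      projC_e_B hij hj ⟨(i:ℕ)+1, hi1⟩ (by simp) (by simp; omega)]
  have hB : projC (Sset n i j) (Bsimple n j) = ww n i j := by
    rw [Bsimple, dif_pos hj, projC_sub, projC_e_B hij hj j hIJ le_rfl,
      projC_e_C hij hj ⟨(j:ℕ)+1, hj⟩ (by simp), sub_zero]
  rw [hA, hB]
  constructor
  · rw [LinearIndependent.pair_iff]
    intro s t hst
    have h0 : s • uu n i + (t - s) • ww n i j = 0 := by
      linear_combination (norm := module) hst
    obtain ⟨h1, h2⟩ := indep hij _ _ h0
    exact ⟨h1, by linarith⟩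
  · ext x
    simp only [reducedRestrictedRoots, Set.mem_setOf_eq, Set.mem_insert_iff,
      Set.mem_singleton_iff]
    constructor
    · rintro ⟨⟨⟨β, hβ, rfl⟩, hne⟩, hhalf⟩
      rw [Set.mem_singleton_iff] at hne
      obtain ⟨c, d, hF, hcd⟩ := proj_root hij hj hβ
      have half_mem : ∀ (γ : EuclideanSpace ℝ (Fin n)), γ ∈ Broots n →
          projC (Sset n i j) γ ≠ 0 →
          (1/2 : ℝ) • projC (Sset n i j) β = projC (Sset n i j) γ →
          False := by
        intro γ hγ hγ0 heq
        exact hhalf ⟨⟨γ, hγ, heq.symm⟩, by rwa [Set.mem_singleton_iff, heq]⟩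
      have hei : e i ∈ Broots n := Or.inr ⟨i, Or.inl rfl⟩
      have heni : -(e i) ∈ Broots n := Or.inr ⟨i, Or.inr rfl⟩
      have hej : e j ∈ Broots n := Or.inr ⟨j, Or.inl rfl⟩
      have henj : -(e j) ∈ Broots n := Or.inr ⟨j, Or.inr rfl⟩
      have hpei : projC (Sset n i j) (e i) = uu n i := projC_e_A hij hj i le_rfl
      have hpej : projC (Sset n i j) (e j) = ww n i j := projC_e_B hij hj j hIJ le_rfl
      rcases hF with ⟨rfl,rfl⟩|⟨rfl,rfl⟩|⟨rfl,rfl⟩|⟨rfl,rfl⟩|⟨rfl,rfl⟩|⟨rfl,rfl⟩|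
        ⟨rfl,rfl⟩|⟨rfl,rfl⟩|⟨rfl,rfl⟩|⟨rfl,rfl⟩|⟨rfl,rfl⟩|⟨rfl,rfl⟩|⟨rfl,rfl⟩
      · exact absurd (by rw [hcd]; module) hne
      · exact Or.inr (Or.inr (Or.inr (Or.inr (Or.inl (by rw [hcd]; module)))))
      · exact Or.inr (Or.inr (Or.inr (Or.inr (Or.inr (Or.inl (by rw [hcd]; module))))))
      · exact Or.inr (Or.inr (Or.inl (by rw [hcd]; module)))
      · exact Or.inr (Or.inr (Or.inr (Or.inl (by rw [hcd]; module))))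
      · exact Or.inr (Or.inr (Or.inr (Or.inr (Or.inr (Or.inr (Or.inl
          (by rw [hcd]; module)))))))
      · exact Or.inr (Or.inr (Or.inr (Or.inr (Or.inr (Or.inr (Or.inr
          (by rw [hcd]; module)))))))
      · exact Or.inl (by rw [hcd]; module)
      · exact Or.inr (Or.inl (by rw [hcd]; module))
      · exact absurd (half_mem (e i) hei (by rw [hpei]; exact uu_ne hij)
          (by rw [hcd, hpei]; module)) id
      · exact absurd (half_mem (-(e i)) heni
          (by rw [projC_neg, hpei]; exact neg_ne_zero.mpr (uu_ne hij))
          (by rw [hcd, projC_neg, hpei]; module)) id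
      · exact absurd (half_mem (e j) hej (by rw [hpej]; exact ww_ne hij)
          (by rw [hcd, hpej]; module)) id
      · exact absurd (half_mem (-(e j)) henj
          (by rw [projC_neg, hpej]; exact neg_ne_zero.mpr (ww_ne hij))
          (by rw [hcd, projC_neg, hpej]; module)) id
    · intro hx
      have hfin : (⟨(i:ℕ)+1, hi1⟩ : Fin n) ≤ j := by rw [Fin.le_def]; simp; omega
      have hlt : i < (⟨(i:ℕ)+1, hi1⟩ : Fin n) := by rw [Fin.lt_def]; simp
      have hpei : projC (Sset n i j) (e i) = uu n i := projC_e_A hij hj i le_rfl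
      have hpei1 : projC (Sset n i j) (e ⟨(i:ℕ)+1, hi1⟩) = ww n i j :=
        projC_e_B hij hj _ (by simp) (by simp; omega)
      have hpej : projC (Sset n i j) (e j) = ww n i j := projC_e_B hij hj j hIJ le_rfl
      -- helper to finish each case
      have mk : ∀ (β : EuclideanSpace ℝ (Fin n)), β ∈ Broots n →
          ∀ c0 d0 : ℝ, projC (Sset n i j) β = c0 • uu n i + d0 • ww n i j →
          ¬(c0 = 0 ∧ d0 = 0) →
          (∀ c d : ℝ, inF c d → ¬(c0/2 = c ∧ d0/2 = d)) →
          x = c0 • uu n i + d0 • ww n i j →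
          (projC (Sset n i j) x ∈ Broots n → True) → -- dummy
          x ∈ restrictedRoots (Broots n) (Sset n i j) ∧
            ¬ (1/2 : ℝ) • x ∈ restrictedRoots (Broots n) (Sset n i j) := by
        intro β hβ c0 d0 hproj hne hhalf hxeq _
        subst hxeq
        refine ⟨⟨⟨β, hβ, hproj⟩, ?_⟩, ?_⟩
        · rw [Set.mem_singleton_iff]
          exact coeff_ne_zero hij hne
        · rintro ⟨⟨γ, hγ, hγeq⟩, -⟩
          obtain ⟨c, d, hF, hcd⟩ := proj_root hij hj hγ
          have heq2 : (c0/2) • uu n i + (d0/2) • ww n i j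
              = c • uu n i + d • ww n i j := by
            rw [← hcd, hγeq]; module
          obtain ⟨h1, h2⟩ := coeff_inj hij heq2
          exact hhalf c d hF ⟨h1, h2⟩
      rcases hx with rfl|rfl|rfl|rfl|rfl|rfl|rfl|rfl
      · exact mk (e i - e ⟨(i:ℕ)+1, hi1⟩) (Or.inl ⟨i, _, hlt, Or.inl rfl⟩) 1 (-1)
          (by rw [projC_sub, hpei, hpei1]; module) (by norm_num)
          (by intro c d hF ⟨h1,h2⟩; rcases hF with ⟨rfl,rfl⟩|⟨rfl,rfl⟩|⟨rfl,rfl⟩|⟨rfl,rfl⟩|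
            ⟨rfl,rfl⟩|⟨rfl,rfl⟩|⟨rfl,rfl⟩|⟨rfl,rfl⟩|⟨rfl,rfl⟩|⟨rfl,rfl⟩|⟨rfl,rfl⟩|
            ⟨rfl,rfl⟩|⟨rfl,rfl⟩ <;> (revert h1 h2; norm_num))
          (by module) (fun _ => trivial)
      · exact mk (-(e i) + e ⟨(i:ℕ)+1, hi1⟩) (Or.inl ⟨i, _, hlt, Or.inr (Or.inr (Or.inl rfl))⟩)
          (-1) 1
          (by rw [projC_add, projC_neg, hpei, hpei1]; module) (by norm_num)
          (by intro c d hF ⟨h1,h2⟩; rcases hF with ⟨rfl,rfl⟩|⟨rfl,rfl⟩|⟨rfl,rfl⟩|⟨rfl,rfl⟩|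
            ⟨rfl,rfl⟩|⟨rfl,rfl⟩|⟨rfl,rfl⟩|⟨rfl,rfl⟩|⟨rfl,rfl⟩|⟨rfl,rfl⟩|⟨rfl,rfl⟩|
            ⟨rfl,rfl⟩|⟨rfl,rfl⟩ <;> (revert h1 h2; norm_num))
          (by module) (fun _ => trivial)
      · exact mk (e j) (Or.inr ⟨j, Or.inl rfl⟩) 0 1
          (by rw [hpej]; module) (by norm_num)
          (by intro c d hF ⟨h1,h2⟩; rcases hF with ⟨rfl,rfl⟩|⟨rfl,rfl⟩|⟨rfl,rfl⟩|⟨rfl,rfl⟩|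
            ⟨rfl,rfl⟩|⟨rfl,rfl⟩|⟨rfl,rfl⟩|⟨rfl,rfl⟩|⟨rfl,rfl⟩|⟨rfl,rfl⟩|⟨rfl,rfl⟩|
            ⟨rfl,rfl⟩|⟨rfl,rfl⟩ <;> (revert h1 h2; norm_num))
          (by module) (fun _ => trivial)
      · exact mk (-(e j)) (Or.inr ⟨j, Or.inr rfl⟩) 0 (-1)
          (by rw [projC_neg, hpej]; module) (by norm_num)
          (by intro c d hF ⟨h1,h2⟩; rcases hF with ⟨rfl,rfl⟩|⟨rfl,rfl⟩|⟨rfl,rfl⟩|⟨rfl,rfl⟩|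
            ⟨rfl,rfl⟩|⟨rfl,rfl⟩|⟨rfl,rfl⟩|⟨rfl,rfl⟩|⟨rfl,rfl⟩|⟨rfl,rfl⟩|⟨rfl,rfl⟩|
            ⟨rfl,rfl⟩|⟨rfl,rfl⟩ <;> (revert h1 h2; norm_num))
          (by module) (fun _ => trivial)
      · exact mk (e i) (Or.inr ⟨i, Or.inl rfl⟩) 1 0
          (by rw [hpei]; module) (by norm_num)
          (by intro c d hF ⟨h1,h2⟩; rcases hF with ⟨rfl,rfl⟩|⟨rfl,rfl⟩|⟨rfl,rfl⟩|⟨rfl,rfl⟩|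
            ⟨rfl,rfl⟩|⟨rfl,rfl⟩|⟨rfl,rfl⟩|⟨rfl,rfl⟩|⟨rfl,rfl⟩|⟨rfl,rfl⟩|⟨rfl,rfl⟩|
            ⟨rfl,rfl⟩|⟨rfl,rfl⟩ <;> (revert h1 h2; norm_num))
          (by module) (fun _ => trivial)
      · exact mk (-(e i)) (Or.inr ⟨i, Or.inr rfl⟩) (-1) 0
          (by rw [projC_neg, hpei]; module) (by norm_num)
          (by intro c d hF ⟨h1,h2⟩; rcases hF with ⟨rfl,rfl⟩|⟨rfl,rfl⟩|⟨rfl,rfl⟩|⟨rfl,rfl⟩|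
            ⟨rfl,rfl⟩|⟨rfl,rfl⟩|⟨rfl,rfl⟩|⟨rfl,rfl⟩|⟨rfl,rfl⟩|⟨rfl,rfl⟩|⟨rfl,rfl⟩|
            ⟨rfl,rfl⟩|⟨rfl,rfl⟩ <;> (revert h1 h2; norm_num))
          (by module) (fun _ => trivial)
      · exact mk (e i + e ⟨(i:ℕ)+1, hi1⟩) (Or.inl ⟨i, _, hlt, Or.inr (Or.inl rfl)⟩) 1 1
          (by rw [projC_add, hpei, hpei1]; module) (by norm_num)
          (by intro c d hF ⟨h1,h2⟩; rcases hF with ⟨rfl,rfl⟩|⟨rfl,rfl⟩|⟨rfl,rfl⟩|⟨rfl,rfl⟩|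
            ⟨rfl,rfl⟩|⟨rfl,rfl⟩|⟨rfl,rfl⟩|⟨rfl,rfl⟩|⟨rfl,rfl⟩|⟨rfl,rfl⟩|⟨rfl,rfl⟩|
            ⟨rfl,rfl⟩|⟨rfl,rfl⟩ <;> (revert h1 h2; norm_num))
          (by module) (fun _ => trivial)
      · exact mk (-(e i) - e ⟨(i:ℕ)+1, hi1⟩) (Or.inl ⟨i, _, hlt, Or.inr (Or.inr (Or.inr rfl))⟩)
          (-1) (-1)
          (by rw [projC_sub, projC_neg, hpei, hpei1]; module) (by norm_num)
          (by intro c d hF ⟨h1,h2⟩; rcases hF with ⟨rfl,rfl⟩|⟨rfl,rfl⟩|⟨rfl,rfl⟩|⟨rfl,rfl⟩|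
            ⟨rfl,rfl⟩|⟨rfl,rfl⟩|⟨rfl,rfl⟩|⟨rfl,rfl⟩|⟨rfl,rfl⟩|⟨rfl,rfl⟩|⟨rfl,rfl⟩|
            ⟨rfl,rfl⟩|⟨rfl,rfl⟩ <;> (revert h1 h2; norm_num))
          (by module) (fun _ => trivial)



end
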